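/- Let K be a field and A the free associative K-algebra on x, y. Let U, U' be K-subspaces with U ⊆ A(2^n) (the span of degree-2^n monomials) and set T = A(2^n)·U + U·A(2^n) ⊆ A(2^{n+1}). Suppose i < j are minimal with w(2^n, i) ∉ U and w(2^n, j) ∉ U + K·w(2^n, i). Then w(2^{n+1}, 2i) ≡ w(2^n, i)·w(2^n, i) (mod T). -/

import Mathlib

open Polynomial in
/-- A monomial of degree `n` in the free algebra `K⟨x,y⟩` (on generators
indexed by `Fin 2`, with `0 ↦ x` and `1 ↦ y`), given by a word `f`. -/
noncomputable def mono (K : Type*) [Field K] {n : ℕ} (f : Fin n → Fin 2) :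
    FreeAlgebra K (Fin 2) :=
  (List.ofFn fun k => FreeAlgebra.ι K (f k)).prod

/-- `w K n i` is the sum of all monomials of degree `n` in `x, y` with exactly
`i` occurrences of `x`. -/
noncomputable def w (K : Type*) [Field K] (n i : ℕ) : FreeAlgebra K (Fin 2) :=
  ∑ f ∈ Finset.univ.filter
      (fun f : Fin n → Fin 2 => (Finset.univ.filter fun k => f k = 0).card = i),
    mono K f

/-- The span of the monomials of degree `n` in the free algebra `K⟨x,y⟩`. -/
noncomputable def Adeg (K : Type*) [Field K] (n : ℕ) :
    Submodule K (FreeAlgebra K (Fin 2)) :=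
  Submodule.span K (Set.range (mono K (n := n)))

/-- If `i < j` are minimal with `w(2^n,i) ∉ U` and
`w(2^n,j) ∉ U + K·w(2^n,i)`, then
`w(2^{n+1}, 2i) ≡ w(2^n,i)·w(2^n,i)` modulo `T = A(2^n)U + U A(2^n)`. -/
lemma mono_append (K : Type*) [Field K] {m m' : ℕ} (f : Fin m → Fin 2) (g : Fin m' → Fin 2) :
    mono K (Fin.append f g) = mono K f * mono K g := by
  unfold mono
  rw [← List.prod_append, ← List.ofFn_fin_append]
  congr 1
  apply congrArg
  funext i
  induction i using Fin.addCases <;> simp [Fin.append_left, Fin.append_right]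

lemma count_append {m m' : ℕ} (f : Fin m → Fin 2) (g : Fin m' → Fin 2) :
    (Finset.univ.filter fun k => Fin.append f g k = 0).card
    = (Finset.univ.filter fun k => f k = 0).card
      + (Finset.univ.filter fun k => g k = 0).card := by
  simp only [Finset.card_filter]
  rw [Fin.sum_univ_add]
  simp [Fin.append_left, Fin.append_right]

lemma key {R : Type*} [NonUnitalNonAssocSemiring R] (a b s : ℕ) (X Y : R) :
    ∑ k ∈ Finset.range (s + 1), (if a = k then X else 0) * (if b = s - k then Y else 0)
    = if a + b = s then X * Y else 0 := by
  simp only [ite_zero_mul]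
  rw [Finset.sum_ite_eq]
  by_cases hab : a + b = s
  · have ha : a ∈ Finset.range (s + 1) := by simp; omega
    have hb : b = s - a := by omega
    rw [if_pos ha, if_pos hb, if_pos hab]
  · simp only [Finset.mem_range]
    split_ifs with h1 h2 <;> (simp_all; try omega)

lemma w_conv (K : Type*) [Field K] (m m' s : ℕ) :
    w K (m + m') s = ∑ k ∈ Finset.range (s + 1), w K m k * w K m' (s - k) := by
  simp only [w, Finset.sum_filter, Finset.sum_mul_sum]
  rw [Finset.sum_comm]
  have step : ∀ fi : Fin m → Fin 2,
      (∑ x ∈ Finset.range (s + 1), ∑ fj : Fin m' → Fin 2,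
        (if (Finset.univ.filter fun k => fi k = 0).card = x then mono K fi else 0) *
          (if (Finset.univ.filter fun k => fj k = 0).card = s - x then mono K fj else 0))
      = ∑ fj : Fin m' → Fin 2,
          if (Finset.univ.filter fun k => fi k = 0).card
              + (Finset.univ.filter fun k => fj k = 0).card = s
            then mono K fi * mono K fj else 0 := fun fi => by
    rw [Finset.sum_comm]
    exact Finset.sum_congr rfl fun fj _ => key ..
  rw [Finset.sum_congr rfl fun fi _ => step fi]
  refine Eq.trans ?_ (Fintype.sum_prod_type
    (f := fun p : (Fin m → Fin 2) × (Fin m' → Fin 2) =>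
      if (Finset.univ.filter fun k => p.1 k = 0).card
          + (Finset.univ.filter fun k => p.2 k = 0).card = s
        then mono K p.1 * mono K p.2 else 0))
  exact (Fintype.sum_equiv (Fin.appendEquiv m m') _ _ (fun p => by
    simp only [Fin.appendEquiv, Equiv.coe_fn_mk, count_append, mono_append]
    rw [← count_append]; rfl)).symm

lemma w_mem_Adeg (K : Type*) [Field K] (m a : ℕ) : w K m a ∈ Adeg K m :=
  Submodule.sum_mem _ fun f _ => Submodule.subset_span ⟨f, rfl⟩


theorem w_square_congruence {K : Type*} [Field K] (n i j : ℕ)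
    (U : Submodule K (FreeAlgebra K (Fin 2))) (hU : U ≤ Adeg K (2 ^ n))
    (hij : i < j)
    (hi : w K (2 ^ n) i ∉ U)
    (himin : ∀ i' : ℕ, i' < i → w K (2 ^ n) i' ∈ U)
    (hj : w K (2 ^ n) j ∉ U ⊔ Submodule.span K {w K (2 ^ n) i})
    (hjmin : ∀ j' : ℕ, i < j' → j' < j →
      w K (2 ^ n) j' ∈ U ⊔ Submodule.span K {w K (2 ^ n) i}) :
    w K (2 ^ (n + 1)) (2 * i) - w K (2 ^ n) i * w K (2 ^ n) i ∈
      Adeg K (2 ^ n) * U + U * Adeg K (2 ^ n) := by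
  have hconv : w K (2 ^ (n + 1)) (2 * i)
      = ∑ k ∈ Finset.range (2 * i + 1), w K (2 ^ n) k * w K (2 ^ n) (2 * i - k) := by
    rw [pow_succ, mul_two]
    exact w_conv ..
  have hi' : i ∈ Finset.range (2 * i + 1) := by simp; omega
  rw [hconv, ← Finset.add_sum_erase _ _ hi', show 2 * i - i = i from by omega,
    add_sub_cancel_left]
  apply Submodule.sum_mem
  intro k hk
  simp only [Finset.mem_erase, Finset.mem_range] at hk
  obtain ⟨hki, hkr⟩ := hk
  rcases lt_or_gt_of_ne hki with h | h
  · exact Submodule.mem_sup_right (Submodule.mul_mem_mul (himin k h) (w_mem_Adeg _ _ _))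
  · exact Submodule.mem_sup_left
      (Submodule.mul_mem_mul (w_mem_Adeg _ _ _) (himin _ (by omega)))
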